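/- Let E be a real inner product space, let s be a positive integer, and let L₁ < 0 be a real number. If H : Fin s → E is a family of vectors such that ⟨H α, H β⟩ = L₁ for all α ≠ β, then the linear span of {H α : α ∈ Fin s} has dimension at least s − 1. -/

import Mathlib

open scoped RealInnerProductSpace

/-- If `H : Fin s → E` is a family of vectors in a real inner product space
with `⟪H α, H β⟫ = L₁ < 0` for all `α ≠ β`, then the span of the `H α`
has dimension at least `s - 1`. -/
theorem span_finrank_ge_of_pairwise_inner_neg
    {E : Type*} [NormedAddCommGroup E] [InnerProductSpace ℝ E]
    (s : ℕ) (hs : 0 < s) (L₁ : ℝ) (hL : L₁ < 0)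
    (H : Fin s → E) (hH : ∀ α β : Fin s, α ≠ β → ⟪H α, H β⟫ = L₁) :
    s - 1 ≤ Module.finrank ℝ (Submodule.span ℝ (Set.range H)) := by
  classical
  set f := Fintype.linearCombination ℝ H with hf
  have hrange : LinearMap.range f = Submodule.span ℝ (Set.range H) :=
    Fintype.range_linearCombination ℝ H
  -- diagonal entries
  have hdiag : ∀ β : Fin s, 0 < ⟪H β, H β⟫ - L₁ := by
    intro β
    have : (0:ℝ) ≤ ⟪H β, H β⟫ := real_inner_self_nonneg
    linarith
  set u : Fin s → ℝ := fun β => -L₁ / (⟪H β, H β⟫ - L₁) with hu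
  have hker : LinearMap.ker f ≤ Submodule.span ℝ {u} := by
    intro c hc
    have hc0 : (∑ α, c α • H α) = 0 := by
      have := (LinearMap.mem_ker).mp hc
      simpa [hf, Fintype.linearCombination_apply] using this
    have key : ∀ β : Fin s, c β = (∑ α, c α) • u β := by
      intro β
      have h1 : ⟪H β, ∑ α, c α • H α⟫ = 0 := by rw [hc0]; simp
      have h2 : (∑ α, c α * ⟪H β, H α⟫) = 0 := by
        simpa [inner_sum, real_inner_smul_right] using h1
      have h3 : (∑ α, c α * ⟪H β, H α⟫)
          = c β * (⟪H β, H β⟫ - L₁) + L₁ * ∑ α, c α := by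
        have : (∑ α, c α * ⟪H β, H α⟫)
            = ∑ α, (c α * L₁ + (if α = β then c β * (⟪H β, H β⟫ - L₁) else 0)) := by
          apply Finset.sum_congr rfl
          intro α _
          by_cases h : α = β
          · subst h; simp; ring
          · rw [hH β α (Ne.symm h)]; simp [h]
        rw [this, Finset.sum_add_distrib, Finset.sum_ite_eq' _ β]
        simp [Finset.mul_sum]
        rw [add_comm]
        congr 1
        exact Finset.sum_congr rfl fun i _ => mul_comm _ _
      have h4 : c β * (⟪H β, H β⟫ - L₁) = -L₁ * ∑ α, c α := by
        rw [h3] at h2; linarith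
      have hne := (hdiag β).ne'
      show c β = (∑ α, c α) * (-L₁ / (⟪H β, H β⟫ - L₁))
      rw [mul_div_assoc', eq_div_iff hne]
      linarith [h4]
    have : c = (∑ α, c α) • u := by
      funext β; simpa using key β
    rw [this]
    exact Submodule.smul_mem _ _ (Submodule.mem_span_singleton_self u)
  have hkerdim : Module.finrank ℝ (LinearMap.ker f) ≤ 1 := by
    calc Module.finrank ℝ (LinearMap.ker f)
        ≤ Module.finrank ℝ (Submodule.span ℝ ({u} : Set (Fin s → ℝ))) :=
          Submodule.finrank_mono hker
      _ ≤ 1 := by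
          by_cases h : u = 0
          · rw [h, Submodule.span_zero_singleton]; simp
          · exact le_of_eq (finrank_span_singleton h)
  have hrn := LinearMap.finrank_range_add_finrank_ker f
  have : Module.finrank ℝ (Fin s → ℝ) = s := by simp
  rw [this, hrange] at hrn
  omega
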